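/- Let X, Y be random variables taking values in compact intervals, with right-continuous joint CDF P_{XY} and marginals P_X, P_Y. If corr(X,Y) = ∫∫ (P_{XY}(x,y) − P_X(x)P_Y(y))² dx dy = 0, then X and Y are independent. -/

import Mathlib

open MeasureTheory ProbabilityTheory Filter Topology

/-- The sequence `1/(n+1)`. -/
private lemma aux_eps_anti : Antitone (fun n : ℕ => (1 : ℝ) / (n + 1)) := by
  intro m n hmn
  apply one_div_le_one_div_of_le (by positivity)
  exact_mod_cast Nat.succ_le_succ hmn

private lemma aux_eps_pos (n : ℕ) : (0 : ℝ) < 1 / (n + 1) := by positivity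

/-- If `t ≤ x + 1/(n+1)` for all `n`, then `t ≤ x`. -/
private lemma aux_le_of_forall (t x : ℝ) (h : ∀ n : ℕ, t ≤ x + 1 / (n + 1)) : t ≤ x := by
  by_contra hc
  push_neg at hc
  obtain ⟨n, hn⟩ := exists_nat_one_div_lt (sub_pos.2 hc)
  have := h n
  linarith

/-- Intersection of preimages of the `Iic (x + 1/(n+1))`. -/
private lemma aux_iInter {Ω : Type*} (X : Ω → ℝ) (x : ℝ) :
    ⋂ n : ℕ, X ⁻¹' Set.Iic (x + 1 / (n + 1)) = X ⁻¹' Set.Iic x := by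
  ext ω
  simp only [Set.mem_iInter, Set.mem_preimage, Set.mem_Iic]
  constructor
  · exact aux_le_of_forall _ _
  · intro h n
    exact h.trans (by linarith [aux_eps_pos n])

/-- Continuity from above, in `toReal` form. -/
private lemma aux_tendsto {Ω : Type*} [MeasurableSpace Ω] (μ : Measure Ω)
    [IsProbabilityMeasure μ] (S : ℕ → Set Ω) (hS : ∀ n, MeasurableSet (S n))
    (hanti : Antitone S) :
    Tendsto (fun n => (μ (S n)).toReal) atTop (𝓝 ((μ (⋂ n, S n)).toReal)) := by
  have h := tendsto_measure_iInter_atTop (μ := μ) (fun n => (hS n).nullMeasurableSet)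
    hanti ⟨0, measure_ne_top μ _⟩
  exact (ENNReal.tendsto_toReal (measure_ne_top μ _)).comp h

/-- For random variables taking values in compact intervals, vanishing of the quadratic
dependency measure `corr(X,Y) = ∫∫ (P_{XY} − P_X P_Y)²` implies independence. -/
theorem indep_of_quadratic_dependency_zero
    {Ω : Type*} [MeasurableSpace Ω] (μ : Measure Ω) [IsProbabilityMeasure μ]
    (X Y : Ω → ℝ) (hX : Measurable X) (hY : Measurable Y)
    (a b c d : ℝ)
    (hXb : ∀ ω, X ω ∈ Set.Icc a b) (hYb : ∀ ω, Y ω ∈ Set.Icc c d)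
    (hcorr : ∫ z : ℝ × ℝ,
        ((μ (X ⁻¹' Set.Iic z.1 ∩ Y ⁻¹' Set.Iic z.2)).toReal
          - (μ (X ⁻¹' Set.Iic z.1)).toReal * (μ (Y ⁻¹' Set.Iic z.2)).toReal) ^ 2 = 0) :
    IndepFun X Y μ := by
  set F : ℝ × ℝ → ℝ := fun z =>
    (μ (X ⁻¹' Set.Iic z.1 ∩ Y ⁻¹' Set.Iic z.2)).toReal
      - (μ (X ⁻¹' Set.Iic z.1)).toReal * (μ (Y ⁻¹' Set.Iic z.2)).toReal with hF
  -- Measurability of the joint CDF.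
  have hjm : Measurable (fun z : ℝ × ℝ => μ (X ⁻¹' Set.Iic z.1 ∩ Y ⁻¹' Set.Iic z.2)) := by
    have hs : MeasurableSet {p : (ℝ × ℝ) × Ω | X p.2 ≤ p.1.1 ∧ Y p.2 ≤ p.1.2} := by
      apply MeasurableSet.inter
      · exact measurableSet_le (hX.comp measurable_snd) (measurable_fst.comp measurable_fst)
      · exact measurableSet_le (hY.comp measurable_snd) (measurable_snd.comp measurable_fst)
    have hmeas : Measurable fun z : ℝ × ℝ =>
        ∫⁻ ω, Set.indicator {p : (ℝ × ℝ) × Ω | X p.2 ≤ p.1.1 ∧ Y p.2 ≤ p.1.2}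
          (fun _ => (1 : ENNReal)) (z, ω) ∂μ :=
      Measurable.lintegral_prod_right
        ((measurable_const.indicator hs).comp (f := id) measurable_id)
    have heq : ∀ z : ℝ × ℝ,
        (∫⁻ ω, Set.indicator {p : (ℝ × ℝ) × Ω | X p.2 ≤ p.1.1 ∧ Y p.2 ≤ p.1.2}
          (fun _ => (1 : ENNReal)) (z, ω) ∂μ) = μ (X ⁻¹' Set.Iic z.1 ∩ Y ⁻¹' Set.Iic z.2) := by
      intro z
      have : (fun ω => Set.indicator {p : (ℝ × ℝ) × Ω | X p.2 ≤ p.1.1 ∧ Y p.2 ≤ p.1.2}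
          (fun _ => (1 : ENNReal)) (z, ω))
          = Set.indicator (X ⁻¹' Set.Iic z.1 ∩ Y ⁻¹' Set.Iic z.2) 1 := by
        ext ω
        by_cases h : X ω ≤ z.1 ∧ Y ω ≤ z.2
        · have hm : ω ∈ X ⁻¹' Set.Iic z.1 ∩ Y ⁻¹' Set.Iic z.2 := ⟨h.1, h.2⟩
          have hm' : (z, ω) ∈ {p : (ℝ × ℝ) × Ω | X p.2 ≤ p.1.1 ∧ Y p.2 ≤ p.1.2} := h
          rw [Set.indicator_of_mem hm', Set.indicator_of_mem hm]
          rfl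
        · have hm : ω ∉ X ⁻¹' Set.Iic z.1 ∩ Y ⁻¹' Set.Iic z.2 := fun hc => h ⟨hc.1, hc.2⟩
          have hm' : (z, ω) ∉ {p : (ℝ × ℝ) × Ω | X p.2 ≤ p.1.1 ∧ Y p.2 ≤ p.1.2} := h
          rw [Set.indicator_of_notMem hm', Set.indicator_of_notMem hm]
      rw [this, lintegral_indicator_one
        ((hX measurableSet_Iic).inter (hY measurableSet_Iic))]
    simpa only [funext heq] using hmeas
  have hGm : Measurable (fun x : ℝ => (μ (X ⁻¹' Set.Iic x)).toReal) := by
    apply Monotone.measurable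
    intro s t hst
    exact ENNReal.toReal_mono (measure_ne_top μ _)
      (measure_mono (Set.preimage_mono (Set.Iic_subset_Iic.2 hst)))
  have hHm : Measurable (fun y : ℝ => (μ (Y ⁻¹' Set.Iic y)).toReal) := by
    apply Monotone.measurable
    intro s t hst
    exact ENNReal.toReal_mono (measure_ne_top μ _)
      (measure_mono (Set.preimage_mono (Set.Iic_subset_Iic.2 hst)))
  have hFm : Measurable F :=
    ((ENNReal.measurable_toReal.comp hjm).sub
      ((hGm.comp measurable_fst).mul (hHm.comp measurable_snd)))
  -- Bound: `|F z| ≤ 1`.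
  have htoReal01 : ∀ s : Set Ω, (μ s).toReal ∈ Set.Icc (0 : ℝ) 1 := by
    intro s
    constructor
    · exact ENNReal.toReal_nonneg
    · rw [show (1 : ℝ) = (μ Set.univ).toReal by simp]
      exact ENNReal.toReal_mono (measure_ne_top μ _) (measure_mono (Set.subset_univ s))
  have hFbound : ∀ z, |F z| ≤ 1 := by
    intro z
    have h1 := htoReal01 (X ⁻¹' Set.Iic z.1 ∩ Y ⁻¹' Set.Iic z.2)
    have h2 := htoReal01 (X ⁻¹' Set.Iic z.1)
    have h3 := htoReal01 (Y ⁻¹' Set.Iic z.2)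
    rw [abs_le]
    constructor
    · simp only [hF]
      nlinarith [h1.1, h1.2, h2.1, h2.2, h3.1, h3.2]
    · simp only [hF]
      nlinarith [h1.1, h1.2, h2.1, h2.2, h3.1, h3.2]
  -- Support: `F` vanishes outside `Icc a b ×ˢ Icc c d`.
  have hsupp : ∀ z : ℝ × ℝ, z ∉ Set.Icc a b ×ˢ Set.Icc c d → F z = 0 := by
    intro z hz
    rw [Set.mem_prod, not_and_or] at hz
    have hcase : ∀ (T : Ω → ℝ) (u v : ℝ) (hT : ∀ ω, T ω ∈ Set.Icc u v) (t : ℝ),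
        t ∉ Set.Icc u v → (T ⁻¹' Set.Iic t = ∅ ∨ T ⁻¹' Set.Iic t = Set.univ) := by
      intro T u v hT t ht
      rw [Set.mem_Icc, not_and_or, not_le, not_le] at ht
      rcases ht with ht | ht
      · left
        ext ω
        simp only [Set.mem_preimage, Set.mem_Iic, Set.mem_empty_iff_false, iff_false, not_le]
        exact lt_of_lt_of_le ht (hT ω).1
      · right
        ext ω
        simp only [Set.mem_preimage, Set.mem_Iic, Set.mem_univ, iff_true]
        exact le_trans (hT ω).2 (le_of_lt ht)
    rcases hz with hz | hz
    · rcases hcase X a b hXb z.1 hz with h | h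
      · simp [hF, h, Set.empty_inter]
      · simp [hF, h, Set.univ_inter, measure_univ]
    · rcases hcase Y c d hYb z.2 hz with h | h
      · simp [hF, h, Set.inter_empty]
      · simp [hF, h, Set.inter_univ, measure_univ]
  -- Integrability of `F ^ 2`.
  have hSmeas : MeasurableSet (Set.Icc a b ×ˢ Set.Icc c d : Set (ℝ × ℝ)) :=
    (measurableSet_Icc.prod measurableSet_Icc)
  have hSfin : volume (Set.Icc a b ×ˢ Set.Icc c d : Set (ℝ × ℝ)) < ⊤ :=
    (isCompact_Icc.prod isCompact_Icc).measure_lt_top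
  have hint : Integrable (fun z => F z ^ 2) (volume : Measure (ℝ × ℝ)) := by
    have hgint : Integrable
        ((Set.Icc a b ×ˢ Set.Icc c d : Set (ℝ × ℝ)).indicator (fun _ => (1 : ℝ)))
        (volume : Measure (ℝ × ℝ)) := by
      rw [integrable_indicator_iff hSmeas]
      exact integrableOn_const hSfin.ne
    refine Integrable.mono' hgint ((hFm.pow_const 2).aestronglyMeasurable) ?_
    filter_upwards with z
    by_cases hz : z ∈ Set.Icc a b ×ˢ Set.Icc c d
    · rw [Set.indicator_of_mem hz]
      have := hFbound z
      rw [Real.norm_eq_abs, abs_pow]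
      calc |F z| ^ 2 ≤ 1 ^ 2 := by
            apply pow_le_pow_left₀ (abs_nonneg _) this
        _ = 1 := one_pow 2
    · rw [Set.indicator_of_notMem hz, hsupp z hz]
      simp
  -- From the vanishing integral: `F = 0` a.e.
  have hae : ∀ᵐ z : ℝ × ℝ, F z = 0 := by
    have h0 : (fun z => F z ^ 2) =ᵐ[volume] 0 := by
      rw [← integral_eq_zero_iff_of_nonneg_ae _ hint]
      · exact hcorr
      · filter_upwards with z
        positivity
    filter_upwards [h0] with z hz
    have : F z ^ 2 = 0 := hz
    exact (pow_eq_zero_iff two_ne_zero).mp this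
  -- Pointwise: `F = 0` everywhere, by right-continuity.
  have hptwise : ∀ x y : ℝ,
      (μ (X ⁻¹' Set.Iic x ∩ Y ⁻¹' Set.Iic y)).toReal
        = (μ (X ⁻¹' Set.Iic x)).toReal * (μ (Y ⁻¹' Set.Iic y)).toReal := by
    intro x y
    -- choose points where F vanishes in shrinking boxes to the upper right
    have hbox : ∀ n : ℕ, ∃ z : ℝ × ℝ,
        z ∈ Set.Ioc x (x + 1 / (n + 1)) ×ˢ Set.Ioc y (y + 1 / (n + 1)) ∧ F z = 0 := by
      intro n
      by_contra hc
      push_neg at hc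
      have hsub : (Set.Ioc x (x + 1 / (n + 1)) ×ˢ Set.Ioc y (y + 1 / (n + 1)) : Set (ℝ × ℝ))
          ⊆ {z | F z ≠ 0} := fun z hz => hc z hz
      have hnull : volume {z : ℝ × ℝ | F z ≠ 0} = 0 := ae_iff.mp hae
      have hle : volume ((Set.Ioc x (x + 1 / (n + 1)) ×ˢ Set.Ioc y (y + 1 / (n + 1)) : Set (ℝ × ℝ)))
          ≤ volume {z : ℝ × ℝ | F z ≠ 0} := measure_mono hsub
      rw [hnull, nonpos_iff_eq_zero] at hle
      have hpos : (0 : ENNReal) <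
          volume (Set.Ioc x (x + 1 / (n + 1)) ×ˢ Set.Ioc y (y + 1 / (n + 1)) : Set (ℝ × ℝ)) := by
        rw [MeasureTheory.Measure.volume_eq_prod, Measure.prod_prod, Real.volume_Ioc,
          Real.volume_Ioc]
        apply ENNReal.mul_pos
        · simp only [ne_eq, ENNReal.ofReal_eq_zero, not_le]
          linarith [aux_eps_pos n]
        · simp only [ne_eq, ENNReal.ofReal_eq_zero, not_le]
          linarith [aux_eps_pos n]
      rw [hle] at hpos
      exact lt_irrefl 0 hpos
    choose z hzmem hzF using hbox
    have hz1 : ∀ n, x < (z n).1 ∧ (z n).1 ≤ x + 1 / (n + 1) := fun n => (hzmem n).1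
    have hz2 : ∀ n, y < (z n).2 ∧ (z n).2 ≤ y + 1 / (n + 1) := fun n => (hzmem n).2
    -- the three squeezes
    have hsq : ∀ (A : ℕ → Set Ω) (A₀ : Set Ω) (hA : ∀ n, MeasurableSet (A n))
        (hanti : Antitone A) (hAint : ⋂ n, A n = A₀)
        (w : ℕ → ℝ) (hlo : ∀ n, (μ A₀).toReal ≤ w n)
        (hhi : ∀ n, w n ≤ (μ (A n)).toReal),
        Tendsto w atTop (𝓝 ((μ A₀).toReal)) := by
      intro A A₀ hA hanti hAint w hlo hhi
      have h := aux_tendsto μ A hA hanti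
      rw [hAint] at h
      exact tendsto_of_tendsto_of_tendsto_of_le_of_le tendsto_const_nhds h hlo hhi
    -- squeeze for the joint CDF
    have hTF : Tendsto (fun n => (μ (X ⁻¹' Set.Iic (z n).1 ∩ Y ⁻¹' Set.Iic (z n).2)).toReal)
        atTop (𝓝 ((μ (X ⁻¹' Set.Iic x ∩ Y ⁻¹' Set.Iic y)).toReal)) := by
      refine hsq (fun n => X ⁻¹' Set.Iic (x + 1 / (n + 1)) ∩ Y ⁻¹' Set.Iic (y + 1 / (n + 1)))
        _ (fun n => (hX measurableSet_Iic).inter (hY measurableSet_Iic)) ?_ ?_ _ ?_ ?_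
      · intro m n hmn
        apply Set.inter_subset_inter
        · exact Set.preimage_mono (Set.Iic_subset_Iic.2 (by linarith [aux_eps_anti hmn]))
        · exact Set.preimage_mono (Set.Iic_subset_Iic.2 (by linarith [aux_eps_anti hmn]))
      · rw [Set.iInter_inter_distrib, aux_iInter X x, aux_iInter Y y]
      · intro n
        apply ENNReal.toReal_mono (measure_ne_top μ _)
        apply measure_mono
        apply Set.inter_subset_inter
        · exact Set.preimage_mono (Set.Iic_subset_Iic.2 (le_of_lt (hz1 n).1))
        · exact Set.preimage_mono (Set.Iic_subset_Iic.2 (le_of_lt (hz2 n).1))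
      · intro n
        apply ENNReal.toReal_mono (measure_ne_top μ _)
        apply measure_mono
        apply Set.inter_subset_inter
        · exact Set.preimage_mono (Set.Iic_subset_Iic.2 (hz1 n).2)
        · exact Set.preimage_mono (Set.Iic_subset_Iic.2 (hz2 n).2)
    -- squeeze for the first marginal CDF
    have hTG : Tendsto (fun n => (μ (X ⁻¹' Set.Iic (z n).1)).toReal)
        atTop (𝓝 ((μ (X ⁻¹' Set.Iic x)).toReal)) := by
      refine hsq (fun n => X ⁻¹' Set.Iic (x + 1 / (n + 1))) _
        (fun n => hX measurableSet_Iic) ?_ (aux_iInter X x) _ ?_ ?_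
      · intro m n hmn
        exact Set.preimage_mono (Set.Iic_subset_Iic.2 (by linarith [aux_eps_anti hmn]))
      · intro n
        exact ENNReal.toReal_mono (measure_ne_top μ _)
          (measure_mono (Set.preimage_mono (Set.Iic_subset_Iic.2 (le_of_lt (hz1 n).1))))
      · intro n
        exact ENNReal.toReal_mono (measure_ne_top μ _)
          (measure_mono (Set.preimage_mono (Set.Iic_subset_Iic.2 (hz1 n).2)))
    -- squeeze for the second marginal CDF
    have hTH : Tendsto (fun n => (μ (Y ⁻¹' Set.Iic (z n).2)).toReal)
        atTop (𝓝 ((μ (Y ⁻¹' Set.Iic y)).toReal)) := by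
      refine hsq (fun n => Y ⁻¹' Set.Iic (y + 1 / (n + 1))) _
        (fun n => hY measurableSet_Iic) ?_ (aux_iInter Y y) _ ?_ ?_
      · intro m n hmn
        exact Set.preimage_mono (Set.Iic_subset_Iic.2 (by linarith [aux_eps_anti hmn]))
      · intro n
        exact ENNReal.toReal_mono (measure_ne_top μ _)
          (measure_mono (Set.preimage_mono (Set.Iic_subset_Iic.2 (le_of_lt (hz2 n).1))))
      · intro n
        exact ENNReal.toReal_mono (measure_ne_top μ _)
          (measure_mono (Set.preimage_mono (Set.Iic_subset_Iic.2 (hz2 n).2)))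
    have hTtotal : Tendsto (fun n => F (z n)) atTop
        (𝓝 ((μ (X ⁻¹' Set.Iic x ∩ Y ⁻¹' Set.Iic y)).toReal
          - (μ (X ⁻¹' Set.Iic x)).toReal * (μ (Y ⁻¹' Set.Iic y)).toReal)) :=
      hTF.sub (hTG.mul hTH)
    have hTzero : Tendsto (fun n => F (z n)) atTop (𝓝 (0 : ℝ)) := by
      simp only [hzF]
      exact tendsto_const_nhds
    have := tendsto_nhds_unique hTtotal hTzero
    linarith
  -- The key measure identity in `ℝ≥0∞`.
  have hmeq : ∀ x y : ℝ, μ (X ⁻¹' Set.Iic x ∩ Y ⁻¹' Set.Iic y)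
      = μ (X ⁻¹' Set.Iic x) * μ (Y ⁻¹' Set.Iic y) := by
    intro x y
    have h := hptwise x y
    rw [← ENNReal.toReal_mul] at h
    exact (ENNReal.toReal_eq_toReal_iff' (measure_ne_top μ _)
      (ENNReal.mul_ne_top (measure_ne_top μ _) (measure_ne_top μ _))).mp h
  -- Independence via the π-system of sets `Iic`.
  show IndepFun X Y μ
  have hgen : (inferInstance : MeasurableSpace ℝ)
      = MeasurableSpace.generateFrom (Set.range Set.Iic) := by
    rw [BorelSpace.measurable_eq (α := ℝ), borel_eq_generateFrom_Iic]
  have hcomapX : MeasurableSpace.comap X (inferInstance : MeasurableSpace ℝ)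
      = MeasurableSpace.generateFrom (Set.preimage X '' Set.range Set.Iic) := by
    rw [hgen, MeasurableSpace.comap_generateFrom]
  have hcomapY : MeasurableSpace.comap Y (inferInstance : MeasurableSpace ℝ)
      = MeasurableSpace.generateFrom (Set.preimage Y '' Set.range Set.Iic) := by
    rw [hgen, MeasurableSpace.comap_generateFrom]
  have hpi : ∀ T : Ω → ℝ, IsPiSystem (Set.preimage T '' Set.range Set.Iic) := by
    intro T s hs t ht _
    obtain ⟨s', ⟨u, rfl⟩, rfl⟩ := hs
    obtain ⟨t', ⟨v, rfl⟩, rfl⟩ := ht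
    refine ⟨Set.Iic (min u v), ⟨min u v, rfl⟩, ?_⟩
    rw [← Set.preimage_inter, Set.Iic_inter_Iic]
  have hsets : IndepSets (Set.preimage X '' Set.range Set.Iic)
      (Set.preimage Y '' Set.range Set.Iic) μ := by
    intro t1 t2 h1 h2
    obtain ⟨s', ⟨u, rfl⟩, rfl⟩ := h1
    obtain ⟨t', ⟨v, rfl⟩, rfl⟩ := h2
    filter_upwards with _
    rw [Kernel.const_apply]
    exact hmeq u v
  exact IndepSets.indep (hX.comap_le) (hY.comap_le) (hpi X) (hpi Y) hcomapX hcomapY hsets
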